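/- Let G be the corona of an odd cycle C of length at least 5, obtained by attaching a pendant vertex to each vertex of C. Then G is localizable and co-well-covered (all maximal cliques of G have size 2), but G has no strong independent set (equivalently, the complement of G has no strong clique). -/
import Mathlib


variable {W : Type*}

/-- `S` is an independent set in `G`. -/
def IsIndepSet (G : SimpleGraph W) (S : Set W) : Prop :=
  ∀ u ∈ S, ∀ v ∈ S, ¬ G.Adj u v

/-- `S` is a maximal independent set in `G`. -/
def MaxIndepSet (G : SimpleGraph W) (S : Set W) : Prop :=
  IsIndepSet G S ∧ ∀ T, IsIndepSet G T → S ⊆ T → T = S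

/-- `K` is a strong clique in `G`: a clique meeting every maximal independent set. -/
def StrongCliqueSet (G : SimpleGraph W) (K : Set W) : Prop :=
  G.IsClique K ∧ ∀ S, MaxIndepSet G S → (K ∩ S).Nonempty

/-- `G` is localizable: its vertex set partitions into strong cliques. -/
def LocalizableSet (G : SimpleGraph W) : Prop :=
  ∃ P : Set (Set W), (∀ K ∈ P, StrongCliqueSet G K) ∧ ∀ v, ∃! K, K ∈ P ∧ v ∈ K

/-- `K` is a maximal clique in `G`. -/
def MaxCliqueSet (G : SimpleGraph W) (K : Set W) : Prop :=
  G.IsClique K ∧ ∀ K', G.IsClique K' → K ⊆ K' → K' = K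

/-- The corona of the cycle of length `m`: vertices `inl i` form a cycle
`inl i ~ inl (i+1)`, and each cycle vertex `inl i` has a pendant vertex `inr i`. -/
def cycleCorona (m : ℕ) : SimpleGraph (ZMod m ⊕ ZMod m) :=
  SimpleGraph.fromRel (fun x y =>
    match x, y with
    | .inl i, .inl j => j = i + 1
    | .inl i, .inr j => i = j
    | _, _ => False)

section CoronaAux

variable {m : ℕ}


lemma nat_ne (hm : 5 ≤ m) {k : ℕ} (hk : 0 < k) (hk4 : k < 5) : ((k : ℕ) : ZMod m) ≠ 0 := by
  have : NeZero m := ⟨by omega⟩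
  intro h
  have h2 := (ZMod.natCast_eq_zero_iff k m).mp h
  have := Nat.le_of_dvd hk h2
  omega

lemma one_ne (hm : 5 ≤ m) : (1 : ZMod m) ≠ 0 := by
  have := nat_ne hm (k := 1) (by norm_num) (by norm_num); simpa using this

lemma three_ne (hm : 5 ≤ m) : (3 : ZMod m) ≠ 0 := by
  have := nat_ne hm (k := 3) (by norm_num) (by norm_num)
  rw [show ((3:ℕ) : ZMod m) = (3 : ZMod m) by push_cast; ring] at this
  exact this

lemma adj_ll (hm : 5 ≤ m) (i j : ZMod m) :
    (cycleCorona m).Adj (.inl i) (.inl j) ↔ j = i + 1 ∨ i = j + 1 := by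
  have h1 := one_ne hm
  simp only [cycleCorona, SimpleGraph.fromRel_adj]
  constructor
  · rintro ⟨-, h | h⟩ <;> simp_all
  · rintro (h | h) <;> subst h <;>
      simp [Sum.inl.injEq, eq_comm, left_eq_add, h1, Ne.symm h1]

lemma adj_lr (i j : ZMod m) :
    (cycleCorona m).Adj (.inl i) (.inr j) ↔ i = j := by
  simp only [cycleCorona, SimpleGraph.fromRel_adj]; simp

lemma adj_rl (i j : ZMod m) :
    (cycleCorona m).Adj (.inr i) (.inl j) ↔ j = i := by
  simp only [cycleCorona, SimpleGraph.fromRel_adj]; simp [eq_comm]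

lemma adj_rr (i j : ZMod m) : ¬ (cycleCorona m).Adj (.inr i) (.inr j) := by
  simp only [cycleCorona, SimpleGraph.fromRel_adj]; simp

lemma trifree (hm : 5 ≤ m) {a b c : ZMod m ⊕ ZMod m}
    (hab : (cycleCorona m).Adj a b) (hac : (cycleCorona m).Adj a c)
    (hbc : (cycleCorona m).Adj b c) : False := by
  obtain i | i := a <;> obtain j | j := b <;> obtain k | k := c <;>
    simp only [adj_ll hm, adj_lr, adj_rl, adj_rr] at hab hac hbc
  · rcases hab with h | h <;> rcases hac with h' | h' <;> rcases hbc with h'' | h'' <;>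
      first
        | exact one_ne hm (by linear_combination h' - h'' - h)
        | exact one_ne hm (by linear_combination h - h' - h'')
        | exact one_ne hm (by linear_combination -h - h' + h'')
        | exact one_ne hm (by linear_combination h - h' + h'')
        | exact one_ne hm (by linear_combination -h + h' - h'')
        | exact one_ne hm (by linear_combination h + h' - h'')
        | exact three_ne hm (by linear_combination -h - h' - h'')
  · rcases hab with h | h
    · exact one_ne hm (by linear_combination hbc - hac - h)
    · exact one_ne hm (by linear_combination hac - hbc - h)
  · rcases hac with h | h
    · exact one_ne hm (by linear_combination hbc - hab - h)
    · exact one_ne hm (by linear_combination hab - hbc - h)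
  · rcases hbc with h | h
    · exact one_ne hm (by linear_combination hac - hab - h)
    · exact one_ne hm (by linear_combination hab - hac - h)

lemma exists_adj (v : ZMod m ⊕ ZMod m) : ∃ w, (cycleCorona m).Adj v w := by
  obtain i | i := v
  · exact ⟨.inr i, (adj_lr i i).mpr rfl⟩
  · exact ⟨.inl i, (adj_rl i i).mpr rfl⟩

lemma edge_maxclique (hm : 5 ≤ m) {u v : ZMod m ⊕ ZMod m}
    (h : (cycleCorona m).Adj u v) : MaxCliqueSet (cycleCorona m) {u, v} := by
  refine ⟨SimpleGraph.isClique_pair.mpr fun _ => h, fun K' hK' hsub => ?_⟩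
  refine Set.Subset.antisymm (fun w hw => ?_) hsub
  by_contra hwn
  simp only [Set.mem_insert_iff, Set.mem_singleton_iff, not_or] at hwn
  obtain ⟨hwu, hwv⟩ := hwn
  have hu : u ∈ K' := hsub (by simp)
  have hv : v ∈ K' := hsub (by simp)
  exact trifree hm h (hK' hu hw (Ne.symm hwu)) (hK' hv hw (Ne.symm hwv))

lemma maxclique_eq_pair (hm : 5 ≤ m) {K : Set (ZMod m ⊕ ZMod m)}
    (hK : MaxCliqueSet (cycleCorona m) K) :
    ∃ u v, (cycleCorona m).Adj u v ∧ K = {u, v} := by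
  obtain ⟨hcl, hmax⟩ := hK
  have hne : K.Nonempty := by
    by_contra h
    rw [Set.not_nonempty_iff_eq_empty] at h
    subst h
    have := hmax {Sum.inl 0} (SimpleGraph.isClique_singleton _) (by simp)
    simp [Set.eq_empty_iff_forall_notMem] at this
  obtain ⟨u, hu⟩ := hne
  obtain ⟨w, hw⟩ := exists_adj u
  have hv : ∃ v ∈ K, v ≠ u := by
    by_contra h
    push_neg at h
    have hKu : K = {u} := Set.eq_singleton_iff_unique_mem.mpr ⟨hu, h⟩
    have := hmax {u, w} (SimpleGraph.isClique_pair.mpr fun _ => hw)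
      (by rw [hKu]; simp)
    rw [hKu] at this
    have hwu : w ∈ ({u} : Set _) := this ▸ (by simp : w ∈ ({u, w} : Set _))
    simp only [Set.mem_singleton_iff] at hwu
    exact (cycleCorona m).irrefl (hwu ▸ hw)
  obtain ⟨v, hvK, hvu⟩ := hv
  have hadj : (cycleCorona m).Adj u v := hcl hu hvK (Ne.symm hvu)
  refine ⟨u, v, hadj, Set.Subset.antisymm (fun w' hw' => ?_) ?_⟩
  · by_contra hwn
    simp only [Set.mem_insert_iff, Set.mem_singleton_iff, not_or] at hwn
    obtain ⟨h1, h2⟩ := hwn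
    exact trifree hm hadj (hcl hu hw' (Ne.symm h1)) (hcl hvK hw' (Ne.symm h2))
  · intro x hx
    simp only [Set.mem_insert_iff, Set.mem_singleton_iff] at hx
    rcases hx with rfl | rfl <;> assumption

end CoronaAux

theorem corona_of_odd_cycle_counterexample (m : ℕ) (hm : 5 ≤ m) (hodd : Odd m) :
    LocalizableSet (cycleCorona m) ∧
      (∀ K : Set (ZMod m ⊕ ZMod m), MaxCliqueSet (cycleCorona m) K → K.ncard = 2) ∧
      ¬ ∃ S : Set (ZMod m ⊕ ZMod m), IsIndepSet (cycleCorona m) S ∧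
          ∀ K, MaxCliqueSet (cycleCorona m) K → (S ∩ K).Nonempty := by
  refine ⟨?_, ?_, ?_⟩
  · -- Localizable
    refine ⟨Set.range (fun i : ZMod m => ({Sum.inl i, Sum.inr i} : Set _)), ?_, ?_⟩
    · rintro K ⟨i, rfl⟩
      refine ⟨SimpleGraph.isClique_pair.mpr fun _ => (adj_lr i i).mpr rfl, ?_⟩
      rintro S ⟨hS, hSmax⟩
      by_contra h
      have hi : Sum.inl i ∉ S := fun hmem => h ⟨_, Or.inl rfl, hmem⟩
      have hri : Sum.inr i ∉ S := fun hmem => h ⟨_, Or.inr rfl, hmem⟩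
      have hT : IsIndepSet (cycleCorona m) (insert (Sum.inr i) S) := by
        intro u hu v hv hadj
        rcases hu with rfl | hu <;> rcases hv with rfl | hv
        · exact (cycleCorona m).irrefl hadj
        · obtain j | j := v
          · rw [adj_rl] at hadj; exact hi (hadj ▸ hv)
          · exact adj_rr i j hadj
        · obtain j | j := u
          · rw [adj_lr] at hadj; exact hi (hadj ▸ hu)
          · exact adj_rr j i hadj
        · exact hS u hu v hv hadj
      have := hSmax _ hT (Set.subset_insert _ _)
      exact hri (this ▸ Set.mem_insert _ _)
    · intro v
      obtain i | i := v
      · refine ⟨{Sum.inl i, Sum.inr i}, ⟨⟨i, rfl⟩, by simp⟩, ?_⟩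
        rintro K ⟨⟨j, rfl⟩, hv⟩
        simp only [Set.mem_insert_iff, Set.mem_singleton_iff] at hv
        rcases hv with h | h <;> simp_all
      · refine ⟨{Sum.inl i, Sum.inr i}, ⟨⟨i, rfl⟩, by simp⟩, ?_⟩
        rintro K ⟨⟨j, rfl⟩, hv⟩
        simp only [Set.mem_insert_iff, Set.mem_singleton_iff] at hv
        rcases hv with h | h <;> simp_all
  · -- co-well-covered
    intro K hK
    obtain ⟨u, v, hadj, rfl⟩ := maxclique_eq_pair hm hK
    exact Set.ncard_pair hadj.ne
  · -- no strong independent set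
    rintro ⟨S, hS, hmeet⟩
    have key : ∀ i : ZMod m, (Sum.inl (i + 1) ∈ S ↔ Sum.inl i ∉ S) := by
      intro i
      constructor
      · intro h1 h0
        exact hS _ h0 _ h1 ((adj_ll hm i (i + 1)).mpr (Or.inl rfl))
      · intro h0
        obtain ⟨x, hxS, hxK⟩ :=
          hmeet {Sum.inl i, Sum.inl (i + 1)}
            (edge_maxclique hm ((adj_ll hm i (i + 1)).mpr (Or.inl rfl)))
        simp only [Set.mem_insert_iff, Set.mem_singleton_iff] at hxK
        rcases hxK with rfl | rfl
        · exact absurd hxS h0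
        · exact hxS
    have hstep : ∀ k : ℕ, (Sum.inl (((k + 1 : ℕ)) : ZMod m) ∈ S ↔
        Sum.inl ((k : ℕ) : ZMod m) ∉ S) := by
      intro k
      have := key ((k : ℕ) : ZMod m)
      push_cast
      exact this
    have heven : ∀ k : ℕ, (Sum.inl (((2 * k : ℕ)) : ZMod m) ∈ S ↔
        Sum.inl ((0 : ℕ) : ZMod m) ∈ S) := by
      intro k
      induction k with
      | zero => rfl
      | succ n ih =>
        have h1 := hstep (2 * n + 1)
        have h2 := hstep (2 * n)
        rw [show 2 * (n + 1) = 2 * n + 1 + 1 by ring, h1, h2, not_not]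
        exact ih
    obtain ⟨n, hn⟩ := hodd
    have h1 : Sum.inl ((m : ℕ) : ZMod m) ∈ S ↔ Sum.inl ((0 : ℕ) : ZMod m) ∈ S := by
      rw [ZMod.natCast_self]; norm_num
    have h2 : Sum.inl ((m : ℕ) : ZMod m) ∈ S ↔ Sum.inl ((0 : ℕ) : ZMod m) ∉ S := by
      have hc : ((m : ℕ) : ZMod m) = ((2 * n + 1 : ℕ) : ZMod m) :=
        congrArg (fun k : ℕ => ((k : ℕ) : ZMod m)) hn
      rw [hc, hstep (2 * n), heven n]
    tauto
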